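/- Let α > 0, let F₁, F₂ : ℝ → ℝ with F₁ continuous and dissipative, and let y ∈ ℝ. Suppose x₁, x₂ ∈ ℝ satisfy x₁ − α·F₁(x₁) = y and x₂ − α·F₂(x₂) = y. Then |x₁ − x₂| ≤ α·|F₁(x₂) − F₂(x₂)|. -/

import Mathlib

/-- Resolvent stability: if `x₁ − α·F₁(x₁) = y` and
`x₂ − α·F₂(x₂) = y` with `F₁` continuous and dissipative, then
`|x₁ − x₂| ≤ α·|F₁(x₂) − F₂(x₂)|`. -/
theorem yosida_resolvent_stability
    (α : ℝ) (hα : 0 < α) (F₁ F₂ : ℝ → ℝ)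
    (hF₁cont : Continuous F₁)
    (hF₁diss : ∀ y₁ y₂ : ℝ, (y₁ - y₂) * (F₁ y₁ - F₁ y₂) ≤ 0)
    (y x₁ x₂ : ℝ)
    (hx₁ : x₁ - α * F₁ x₁ = y) (hx₂ : x₂ - α * F₂ x₂ = y) :
    |x₁ - x₂| ≤ α * |F₁ x₂ - F₂ x₂| := by
  rcases eq_or_ne x₁ x₂ with h | h
  · simp [h]
    positivity
  · have hd : (0:ℝ) < |x₁ - x₂| := abs_pos.mpr (sub_ne_zero.mpr h)
    rw [← mul_le_mul_iff_of_pos_right hd]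
    have key : (x₁ - x₂) * (x₁ - x₂)
        ≤ α * ((x₁ - x₂) * (F₁ x₂ - F₂ x₂)) := by
      have hdiff : x₁ - x₂ = α * (F₁ x₁ - F₂ x₂) := by
        have := hx₁.trans hx₂.symm; ring_nf; nlinarith [this]
      have h1 := hF₁diss x₁ x₂
      have e : (x₁ - x₂) * (x₁ - x₂) = α * ((x₁ - x₂) * (F₁ x₁ - F₂ x₂)) := by
        nth_rewrite 2 [hdiff]; ring
      have h2 : α * ((x₁ - x₂) * (F₁ x₁ - F₁ x₂)) ≤ 0 :=
        mul_nonpos_of_nonneg_of_nonpos hα.le h1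
      nlinarith [e, h2]
    calc |x₁ - x₂| * |x₁ - x₂| = (x₁ - x₂) * (x₁ - x₂) := by
          rw [← abs_mul, abs_of_nonneg (mul_self_nonneg _)]
      _ ≤ α * ((x₁ - x₂) * (F₁ x₂ - F₂ x₂)) := key
      _ ≤ α * (|x₁ - x₂| * |F₁ x₂ - F₂ x₂|) := by
          have := le_abs_self ((x₁ - x₂) * (F₁ x₂ - F₂ x₂))
          rw [abs_mul] at this
          exact mul_le_mul_of_nonneg_left this hα.le
      _ = α * |F₁ x₂ - F₂ x₂| * |x₁ - x₂| := by ring
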